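/- If a Kronecker module M of type (2,2) on V is semistable but not stable, then there exist A, B ∈ SL₂(ℂ), nonzero linear functionals g, h ∈ V*, and a linear functional k ∈ V*, such that A·M(x)·B = [[g(x), k(x)],[0, h(x)]] for all x ∈ V (i.e., M is equivalent to an upper triangular matrix of linear forms with nonzero diagonal entries). -/

import Mathlib

open Matrix Module

/-- Every nonzero vector in `ℂ²` is the first column of some `SL₂` matrix. -/
lemma exists_SL2_col (v : Fin 2 → ℂ) (hv : v ≠ 0) :
    ∃ C : Matrix.SpecialLinearGroup (Fin 2) ℂ,
      (C : Matrix (Fin 2) (Fin 2) ℂ) *ᵥ Pi.single 0 1 = v := by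
  by_cases h0 : v 0 ≠ 0
  · refine ⟨⟨!![v 0, 0; v 1, (v 0)⁻¹], by rw [Matrix.det_fin_two_of]; field_simp; ring⟩, ?_⟩
    funext i
    fin_cases i <;> simp [Matrix.mulVec_single]
  · push_neg at h0
    have h1 : v 1 ≠ 0 := by
      intro h1
      apply hv
      funext i; fin_cases i <;> simp [h0, h1]
    refine ⟨⟨!![0, -(v 1)⁻¹; v 1, 0], by rw [Matrix.det_fin_two_of]; field_simp; ring⟩, ?_⟩
    funext i
    fin_cases i <;> simp [Matrix.mulVec_single, h0]

/-- The `(i,j)` entry of a matrix, as a linear map. -/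
def entryLM (i j : Fin 2) : Matrix (Fin 2) (Fin 2) ℂ →ₗ[ℂ] ℂ where
  toFun m := m i j
  map_add' _ _ := rfl
  map_smul' _ _ := rfl



/-- Drezet's semistability for Kronecker modules of type (2,2). -/
def KroneckerSemistable {V : Type*} [AddCommGroup V] [Module ℂ V]
    (M : V →ₗ[ℂ] Matrix (Fin 2) (Fin 2) ℂ) : Prop :=
  ∀ V₁ V₂ : Submodule ℂ (Fin 2 → ℂ),
    ¬(V₁ = ⊥ ∧ V₂ = ⊥) → ¬(V₁ = ⊤ ∧ V₂ = ⊤) →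
    (∀ (x : V), ∀ w ∈ V₁, (M x).mulVec w ∈ V₂) →
    Module.finrank ℂ V₁ ≤ Module.finrank ℂ V₂

/-- Drezet's stability for Kronecker modules of type (2,2). -/
def KroneckerStable {V : Type*} [AddCommGroup V] [Module ℂ V]
    (M : V →ₗ[ℂ] Matrix (Fin 2) (Fin 2) ℂ) : Prop :=
  ∀ V₁ V₂ : Submodule ℂ (Fin 2 → ℂ),
    ¬(V₁ = ⊥ ∧ V₂ = ⊥) → ¬(V₁ = ⊤ ∧ V₂ = ⊤) →
    (∀ (x : V), ∀ w ∈ V₁, (M x).mulVec w ∈ V₂) →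
    Module.finrank ℂ V₁ < Module.finrank ℂ V₂

/-- A strictly semistable Kronecker module of type (2,2) is `SL₂×SL₂`-equivalent to
an upper triangular matrix of linear forms with nonzero diagonal entries. -/
theorem kronecker_strictly_semistable_upper_triangular
    {V : Type*} [AddCommGroup V] [Module ℂ V] [FiniteDimensional ℂ V]
    (M : V →ₗ[ℂ] Matrix (Fin 2) (Fin 2) ℂ) (hM : M ≠ 0)
    (hss : KroneckerSemistable M) (hns : ¬ KroneckerStable M) :
    ∃ (A B : Matrix.SpecialLinearGroup (Fin 2) ℂ) (g h k : V →ₗ[ℂ] ℂ),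
      g ≠ 0 ∧ h ≠ 0 ∧
      ∀ x : V,
        (A : Matrix (Fin 2) (Fin 2) ℂ) * M x * (B : Matrix (Fin 2) (Fin 2) ℂ)
          = !![g x, k x; 0, h x] := by
  rw [KroneckerStable] at hns
  push_neg at hns
  obtain ⟨V₁, V₂, h1, h2, hinv, hle⟩ := hns
  have heq : finrank ℂ V₁ = finrank ℂ V₂ :=
    le_antisymm (hss V₁ V₂ (fun h => h1 h.1 h.2) (fun h => h2 h.1 h.2) hinv) hle
  have hfull : finrank ℂ (Fin 2 → ℂ) = 2 := by simp
  have hr1 : finrank ℂ V₁ = 1 := by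
    have hb : finrank ℂ V₁ ≤ 2 := by simpa using V₁.finrank_le
    by_contra hne
    have h01 : finrank ℂ V₁ = 0 ∨ finrank ℂ V₁ = 2 := by omega
    rcases h01 with h | h
    · exact h1 (Submodule.finrank_eq_zero.mp h)
        (Submodule.finrank_eq_zero.mp (heq.symm.trans h))
    · exact h2 (Submodule.eq_top_of_finrank_eq (h.trans hfull.symm))
        (Submodule.eq_top_of_finrank_eq ((heq.symm.trans h).trans hfull.symm))
  have hr2 : finrank ℂ V₂ = 1 := heq ▸ hr1
  obtain ⟨v₁, hv₁V, hv₁⟩ := Submodule.exists_mem_ne_zero_of_ne_bot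
    (p := V₁) (fun hb => by rw [hb] at hr1; simp at hr1)
  obtain ⟨v₂, hv₂V, hv₂⟩ := Submodule.exists_mem_ne_zero_of_ne_bot
    (p := V₂) (fun hb => by rw [hb] at hr2; simp at hr2)
  have hV₂span : V₂ = Submodule.span ℂ {v₂} := by
    refine (Submodule.eq_of_le_of_finrank_eq ((Submodule.span_singleton_le_iff_mem _ _).mpr hv₂V)
      ?_).symm
    rw [hr2, finrank_span_singleton hv₂]
  obtain ⟨C₁, hC₁⟩ := exists_SL2_col v₁ hv₁
  obtain ⟨C₂, hC₂⟩ := exists_SL2_col v₂ hv₂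
  set A := C₂⁻¹ with hA
  have hAC : (A : Matrix (Fin 2) (Fin 2) ℂ) * (C₂ : Matrix (Fin 2) (Fin 2) ℂ) = 1 := by
    rw [← Matrix.SpecialLinearGroup.coe_mul, inv_mul_cancel,
      Matrix.SpecialLinearGroup.coe_one]
  have hCA : (C₂ : Matrix (Fin 2) (Fin 2) ℂ) * (A : Matrix (Fin 2) (Fin 2) ℂ) = 1 := by
    rw [← Matrix.SpecialLinearGroup.coe_mul, mul_inv_cancel,
      Matrix.SpecialLinearGroup.coe_one]
  set B := C₁ with hB
  set N : V →ₗ[ℂ] Matrix (Fin 2) (Fin 2) ℂ :=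
    (LinearMap.mulRight ℂ (B : Matrix (Fin 2) (Fin 2) ℂ)) ∘ₗ
      (LinearMap.mulLeft ℂ (A : Matrix (Fin 2) (Fin 2) ℂ)) ∘ₗ M with hN
  have hNval : ∀ x : V, N x = (A : Matrix (Fin 2) (Fin 2) ℂ) * M x * B := fun x => rfl
  have hNvec : ∀ (x : V) (u : Fin 2 → ℂ),
      N x *ᵥ u = (A : Matrix (Fin 2) (Fin 2) ℂ) *ᵥ
        ((M x) *ᵥ ((B : Matrix (Fin 2) (Fin 2) ℂ) *ᵥ u)) := by
    intro x u
    simp only [hNval, Matrix.mulVec_mulVec, Matrix.mul_assoc]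
  have hAvec : ∀ v : Fin 2 → ℂ,
      (C₂ : Matrix (Fin 2) (Fin 2) ℂ) *ᵥ ((A : Matrix (Fin 2) (Fin 2) ℂ) *ᵥ v) = v := by
    intro v
    rw [Matrix.mulVec_mulVec, hCA, Matrix.one_mulVec]
  have hAv₂ : (A : Matrix (Fin 2) (Fin 2) ℂ) *ᵥ v₂ = Pi.single 0 1 := by
    rw [← hC₂, Matrix.mulVec_mulVec, hAC, Matrix.one_mulVec]
  have hNe₁ : ∀ x : V, N x *ᵥ Pi.single 0 1
      = (A : Matrix (Fin 2) (Fin 2) ℂ) *ᵥ ((M x) *ᵥ v₁) := by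
    intro x; rw [hNvec, hC₁]
  -- the first column of `N x` is a multiple of `e₁`
  have hcol : ∀ x : V, ∃ c : ℂ,
      N x *ᵥ Pi.single 0 1 = c • (Pi.single 0 1 : Fin 2 → ℂ) := by
    intro x
    have hmem : (M x) *ᵥ v₁ ∈ V₂ := hinv x v₁ hv₁V
    rw [hV₂span, Submodule.mem_span_singleton] at hmem
    obtain ⟨c, hc⟩ := hmem
    refine ⟨c, ?_⟩
    rw [hNe₁, ← hc, Matrix.mulVec_smul, hAv₂]
  have hlow : ∀ x : V, N x 1 0 = 0 := by
    intro x
    obtain ⟨c, hc⟩ := hcol x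
    have := congrFun hc 1
    simpa [Matrix.mulVec_single] using this
  refine ⟨A, B, entryLM 0 0 ∘ₗ N, entryLM 1 1 ∘ₗ N, entryLM 0 1 ∘ₗ N, ?_, ?_, ?_⟩
  · -- g ≠ 0
    intro hg
    have hzero : ∀ x : V, (M x) *ᵥ v₁ = 0 := by
      intro x
      have h00 : N x 0 0 = 0 := LinearMap.congr_fun hg x
      have hcol0 : N x *ᵥ Pi.single 0 1 = 0 := by
        funext i
        fin_cases i <;> simp [Matrix.mulVec_single, h00, hlow x]
      have hN1 : (A : Matrix (Fin 2) (Fin 2) ℂ) *ᵥ ((M x) *ᵥ v₁) = 0 := by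
        rw [← hNe₁, hcol0]
      rw [← hAvec ((M x) *ᵥ v₁), hN1, Matrix.mulVec_zero]
    have hss' := hss (Submodule.span ℂ {v₁}) ⊥
      (fun h => hv₁ (Submodule.span_singleton_eq_bot.mp h.1))
      (fun h => (bot_ne_top (α := Submodule ℂ (Fin 2 → ℂ))) h.2)
      (fun x w hw => by
        rw [Submodule.mem_span_singleton] at hw
        obtain ⟨c, rfl⟩ := hw
        simp [Matrix.mulVec_smul, hzero x])
    rw [finrank_span_singleton hv₁] at hss'
    simp at hss'
  · -- h ≠ 0
    intro hh
    have hmemV₂ : ∀ (x : V) (w : Fin 2 → ℂ), (M x) *ᵥ w ∈ V₂ := by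
      intro x w
      have h11 : N x 1 1 = 0 := LinearMap.congr_fun hh x
      set B' := B⁻¹ with hB'
      have hBB' : (B : Matrix (Fin 2) (Fin 2) ℂ) * (B' : Matrix (Fin 2) (Fin 2) ℂ) = 1 := by
        rw [← Matrix.SpecialLinearGroup.coe_mul, mul_inv_cancel,
          Matrix.SpecialLinearGroup.coe_one]
      set u := (B' : Matrix (Fin 2) (Fin 2) ℂ) *ᵥ w with hu
      have hw : w = (B : Matrix (Fin 2) (Fin 2) ℂ) *ᵥ u := by
        rw [hu, Matrix.mulVec_mulVec, hBB', Matrix.one_mulVec]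
      have hrow : (N x *ᵥ u) 1 = 0 := by
        simp [Matrix.mulVec, dotProduct, Fin.sum_univ_two, h11, hlow x]
      have hNu : N x *ᵥ u = ((N x *ᵥ u) 0) • (Pi.single 0 1 : Fin 2 → ℂ) := by
        funext i
        fin_cases i <;> simp [hrow]
      have hA_Mw : (A : Matrix (Fin 2) (Fin 2) ℂ) *ᵥ ((M x) *ᵥ w) = N x *ᵥ u := by
        rw [hNvec x u, ← hw]
      obtain ⟨c, hNuc⟩ : ∃ c : ℂ, N x *ᵥ u = c • (Pi.single 0 1 : Fin 2 → ℂ) := ⟨_, hNu⟩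
      have : (M x) *ᵥ w = c • v₂ := by
        rw [← hAvec ((M x) *ᵥ w), hA_Mw, hNuc, Matrix.mulVec_smul, hC₂]
      rw [this, hV₂span]
      exact Submodule.smul_mem _ _ (Submodule.mem_span_singleton_self v₂)
    have hss' := hss ⊤ V₂
      (fun h => (bot_ne_top (α := Submodule ℂ (Fin 2 → ℂ))) h.1.symm)
      (fun h => by
        have h2' : finrank ℂ V₂ = 2 := by rw [h.2, finrank_top, hfull]
        rw [hr2] at h2'
        exact absurd h2' (by decide))
      (fun x w _ => hmemV₂ x w)
    rw [finrank_top, hfull, hr2] at hss'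
    omega
  · -- the matrix identity
    intro x
    have h10 := hlow x
    rw [← hNval x]
    funext i j
    fin_cases i <;> fin_cases j <;> simp [entryLM, h10] <;> rfl
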